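/- For i ∈ {1,…,5}, let Bᵢ(X) be the linear form in X₁,…,X₅ given by the determinant of the 4×4 matrix whose columns, indexed by j ∈ {1,…,5}∖{i} in increasing order, are (1, xⱼ², xⱼ⁴, xⱼXⱼ), and let b_{ij} ∈ ℂ[x₁,…,x₅] be the coefficient of Xⱼ in Bᵢ (so b_{ii} = 0). Then for all x₁,…,x₅ ∈ ℂ: b₃₁·b₄₂·(x₁²−x₄²)(x₂²−x₃²) = b₃₂·b₄₁·(x₁²−x₃²)(x₂²−x₄²). Equivalently, the cross ratio γ₆₅ = b₃₁b₄₂/(b₃₂b₄₁) associated to the tritangent plane t₆₅ equals (x₁²−x₃²)(x₂²−x₄²)/((x₁²−x₄²)(x₂²−x₃²)). -/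
import Mathlib

noncomputable def Bform (x : Fin 5 → ℂ) (i : Fin 5) (X : Fin 5 → ℂ) : ℂ :=
  Matrix.det (Matrix.of fun (r c : Fin 4) =>
    ![(1 : ℂ), x (i.succAbove c) ^ 2, x (i.succAbove c) ^ 4,
      x (i.succAbove c) * X (i.succAbove c)] r)

set_option maxHeartbeats 1000000 in
lemma detD (y z : Fin 4 → ℂ) :
    Matrix.det (Matrix.of fun (r c : Fin 4) =>
      ![(1 : ℂ), y c ^ 2, y c ^ 4, y c * z c] r) =
    -(y 0 * z 0) * ((y 2 ^ 2 - y 1 ^ 2) * (y 3 ^ 2 - y 1 ^ 2) * (y 3 ^ 2 - y 2 ^ 2))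
    + (y 1 * z 1) * ((y 2 ^ 2 - y 0 ^ 2) * (y 3 ^ 2 - y 0 ^ 2) * (y 3 ^ 2 - y 2 ^ 2))
    - (y 2 * z 2) * ((y 1 ^ 2 - y 0 ^ 2) * (y 3 ^ 2 - y 0 ^ 2) * (y 3 ^ 2 - y 1 ^ 2))
    + (y 3 * z 3) * ((y 1 ^ 2 - y 0 ^ 2) * (y 2 ^ 2 - y 0 ^ 2) * (y 2 ^ 2 - y 1 ^ 2)) := by
  have e1 : (Fin.succ 2 : Fin 4) = 3 := rfl
  have e2 : (Fin.succAbove 2 2 : Fin 4) = 3 := rfl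
  have e3 : (Fin.castSucc 2 : Fin 4) = 2 := rfl
  have e4 : (Fin.succAbove 1 2 : Fin 4) = 3 := rfl
  have e5 : (Fin.succAbove 3 2 : Fin 4) = 2 := rfl
  simp [Matrix.det_succ_row_zero, Fin.sum_univ_succ, e1, e2, e3, e4, e5]
  ring

set_option maxHeartbeats 1000000 in
lemma bval (x : Fin 5 → ℂ) (b : Fin 5 → Fin 5 → ℂ)
    (hb : ∀ (i : Fin 5) (X : Fin 5 → ℂ), Bform x i X = ∑ j, b i j * X j)
    (i j : Fin 5) (y : Fin 4 → ℂ) (z : Fin 4 → ℂ)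
    (hy : ∀ c : Fin 4, x (i.succAbove c) = y c)
    (hz : ∀ c : Fin 4, (Pi.single j 1 : Fin 5 → ℂ) (i.succAbove c) = z c) :
    b i j =
    -(y 0 * z 0) * ((y 2 ^ 2 - y 1 ^ 2) * (y 3 ^ 2 - y 1 ^ 2) * (y 3 ^ 2 - y 2 ^ 2))
    + (y 1 * z 1) * ((y 2 ^ 2 - y 0 ^ 2) * (y 3 ^ 2 - y 0 ^ 2) * (y 3 ^ 2 - y 2 ^ 2))
    - (y 2 * z 2) * ((y 1 ^ 2 - y 0 ^ 2) * (y 3 ^ 2 - y 0 ^ 2) * (y 3 ^ 2 - y 1 ^ 2))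
    + (y 3 * z 3) * ((y 1 ^ 2 - y 0 ^ 2) * (y 2 ^ 2 - y 0 ^ 2) * (y 2 ^ 2 - y 1 ^ 2)) := by
  have key : b i j = Bform x i (Pi.single j 1) := by
    rw [hb, Fin.sum_univ_five]
    fin_cases j <;> simp [Pi.single_apply]
  rw [key]
  have h : Bform x i (Pi.single j 1) = Matrix.det (Matrix.of fun (r c : Fin 4) =>
      ![(1 : ℂ), y c ^ 2, y c ^ 4, y c * z c] r) := by
    unfold Bform
    congr 1
    ext r c
    simp only [Matrix.of_apply, hy, hz]
  rw [h, detD]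

theorem cross_ratio_gamma65 (x : Fin 5 → ℂ) (b : Fin 5 → Fin 5 → ℂ)
    (hb : ∀ (i : Fin 5) (X : Fin 5 → ℂ), Bform x i X = ∑ j, b i j * X j) :
    b 2 0 * b 3 1 * ((x 0 ^ 2 - x 3 ^ 2) * (x 1 ^ 2 - x 2 ^ 2)) =
      b 2 1 * b 3 0 * ((x 0 ^ 2 - x 2 ^ 2) * (x 1 ^ 2 - x 3 ^ 2)) := by
  have h20 := bval x b hb 2 0 ![x 0, x 1, x 3, x 4] ![1, 0, 0, 0]
    (by intro c; fin_cases c <;> rfl) (by intro c; fin_cases c <;> norm_num [Pi.single_apply] <;> decide)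
  have h21 := bval x b hb 2 1 ![x 0, x 1, x 3, x 4] ![0, 1, 0, 0]
    (by intro c; fin_cases c <;> rfl) (by intro c; fin_cases c <;> norm_num [Pi.single_apply] <;> decide)
  have h30 := bval x b hb 3 0 ![x 0, x 1, x 2, x 4] ![1, 0, 0, 0]
    (by intro c; fin_cases c <;> rfl) (by intro c; fin_cases c <;> norm_num [Pi.single_apply] <;> decide)
  have h31 := bval x b hb 3 1 ![x 0, x 1, x 2, x 4] ![0, 1, 0, 0]
    (by intro c; fin_cases c <;> rfl) (by intro c; fin_cases c <;> norm_num [Pi.single_apply] <;> decide)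
  simp only [Matrix.cons_val_zero, Matrix.cons_val_one, Matrix.head_cons,
    Matrix.cons_val_two, Matrix.tail_cons, Matrix.cons_val_three] at h20 h21 h30 h31
  rw [h20, h21, h30, h31]
  ring
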